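/- arXiv:2402.04167 — 3 statements merged into one kernel-verified Lean document; each statement's English description precedes it below -/
import Mathlib

section
/- Let n ≥ 3 and φ(x₁,x₂) = x₁x₂² - x₁ⁿ with n odd. Then for any (c₁,c₂) ≠ (0,0), every critical point a = (a₁,a₂) of Φ(x) = φ(x) - c₁x₁ - c₂x₂ is non-degenerate, i.e. det Hess Φ(a) ≠ 0. -/
open Real

noncomputable def pd1 (f : ℝ × ℝ → ℝ) (a : ℝ × ℝ) : ℝ := fderiv ℝ f a (1, 0)
noncomputable def pd2 (f : ℝ × ℝ → ℝ) (a : ℝ × ℝ) : ℝ := fderiv ℝ f a (0, 1)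

/-- Determinant of the Hessian matrix of second partial derivatives. -/
noncomputable def hessDet (f : ℝ × ℝ → ℝ) (a : ℝ × ℝ) : ℝ :=
  pd1 (pd1 f) a * pd2 (pd2 f) a - pd1 (pd2 f) a * pd2 (pd1 f) a

lemma hasF (n : ℕ) (c₁ c₂ : ℝ) (x : ℝ × ℝ) :
    HasFDerivAt (fun x : ℝ × ℝ => x.1 * x.2 ^ 2 - x.1 ^ n - c₁ * x.1 - c₂ * x.2)
      ((x.1 • ((↑2 * x.2 ^ 1) • (ContinuousLinearMap.snd ℝ ℝ ℝ)) +
        x.2 ^ 2 • (ContinuousLinearMap.fst ℝ ℝ ℝ)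
        - (↑n * x.1 ^ (n-1)) • (ContinuousLinearMap.fst ℝ ℝ ℝ)
        - c₁ • (ContinuousLinearMap.fst ℝ ℝ ℝ)
        - c₂ • (ContinuousLinearMap.snd ℝ ℝ ℝ))) x := by
  exact (((hasFDerivAt_fst.mul
      ((hasDerivAt_pow 2 x.2).comp_hasFDerivAt x hasFDerivAt_snd)).sub
    ((hasDerivAt_pow n x.1).comp_hasFDerivAt x hasFDerivAt_fst)).sub
    ((hasFDerivAt_fst (𝕜 := ℝ)).const_mul c₁)).sub
    ((hasFDerivAt_snd (𝕜 := ℝ)).const_mul c₂)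

lemma pd1Φ (n : ℕ) (c₁ c₂ : ℝ) :
    pd1 (fun x : ℝ × ℝ => x.1 * x.2 ^ 2 - x.1 ^ n - c₁ * x.1 - c₂ * x.2)
      = fun x => x.2 ^ 2 - n * x.1 ^ (n-1) - c₁ := by
  funext x
  have h := (hasF n c₁ c₂ x).fderiv
  simp only [pd1, h]
  simp

lemma pd2Φ (n : ℕ) (c₁ c₂ : ℝ) :
    pd2 (fun x : ℝ × ℝ => x.1 * x.2 ^ 2 - x.1 ^ n - c₁ * x.1 - c₂ * x.2)
      = fun x => 2 * x.1 * x.2 - c₂ := by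
  funext x
  have h := (hasF n c₁ c₂ x).fderiv
  simp only [pd2, h]
  simp
  ring

lemma hasF1 (n : ℕ) (c₁ : ℝ) (x : ℝ × ℝ) :
    HasFDerivAt (fun x : ℝ × ℝ => x.2 ^ 2 - ↑n * x.1 ^ (n-1) - c₁)
      ((↑2 * x.2 ^ 1) • (ContinuousLinearMap.snd ℝ ℝ ℝ)
        - (n : ℝ) • ((↑(n-1) * x.1 ^ (n-1-1)) • (ContinuousLinearMap.fst ℝ ℝ ℝ))
        - 0) x := by
  exact ((((hasDerivAt_pow 2 x.2).comp_hasFDerivAt x hasFDerivAt_snd).sub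
    (((hasDerivAt_pow (n-1) x.1).comp_hasFDerivAt x hasFDerivAt_fst).const_mul (n : ℝ))).sub
    (hasFDerivAt_const c₁ x))

lemma hasF2 (c₂ : ℝ) (x : ℝ × ℝ) :
    HasFDerivAt (fun x : ℝ × ℝ => 2 * x.1 * x.2 - c₂)
      ((2 * x.1) • (ContinuousLinearMap.snd ℝ ℝ ℝ) +
        x.2 • ((2 : ℝ) • (ContinuousLinearMap.fst ℝ ℝ ℝ)) - 0) x := by
  exact (((hasFDerivAt_fst (𝕜 := ℝ)).const_mul 2).mul hasFDerivAt_snd).sub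
    (hasFDerivAt_const c₂ x)

theorem stmt0 (n : ℕ) (hn : 3 ≤ n) (hodd : Odd n) (c₁ c₂ : ℝ)
    (hc : (c₁, c₂) ≠ (0, 0))
    (Φ : ℝ × ℝ → ℝ)
    (hΦ : Φ = fun x => x.1 * x.2 ^ 2 - x.1 ^ n - c₁ * x.1 - c₂ * x.2)
    (a : ℝ × ℝ) (ha : pd1 Φ a = 0 ∧ pd2 Φ a = 0) :
    hessDet Φ a ≠ 0 := by
  subst hΦ
  obtain ⟨h1, h2⟩ := ha
  rw [pd1Φ n c₁ c₂] at h1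
  rw [pd2Φ n c₁ c₂] at h2
  have e11 : pd1 (pd1 fun x : ℝ × ℝ => x.1 * x.2 ^ 2 - x.1 ^ n - c₁ * x.1 - c₂ * x.2) a
      = -(n * (((n-1 : ℕ) : ℝ) * a.1 ^ (n-1-1))) := by
    rw [pd1Φ n c₁ c₂]
    have h := (hasF1 n c₁ a).fderiv
    simp only [pd1, h]
    simp
  have e21 : pd2 (pd1 fun x : ℝ × ℝ => x.1 * x.2 ^ 2 - x.1 ^ n - c₁ * x.1 - c₂ * x.2) a
      = 2 * a.2 := by
    rw [pd1Φ n c₁ c₂]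
    have h := (hasF1 n c₁ a).fderiv
    simp only [pd2, h]
    simp
  have e12 : pd1 (pd2 fun x : ℝ × ℝ => x.1 * x.2 ^ 2 - x.1 ^ n - c₁ * x.1 - c₂ * x.2) a
      = 2 * a.2 := by
    rw [pd2Φ n c₁ c₂]
    have h := (hasF2 c₂ a).fderiv
    simp only [pd1, h]
    simp
    ring
  have e22 : pd2 (pd2 fun x : ℝ × ℝ => x.1 * x.2 ^ 2 - x.1 ^ n - c₁ * x.1 - c₂ * x.2) a
      = 2 * a.1 := by
    rw [pd2Φ n c₁ c₂]
    have h := (hasF2 c₂ a).fderiv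
    simp only [pd2, h]
    simp
  rw [hessDet, e11, e21, e12, e22]
  have hane : a ≠ 0 := by
    rintro rfl
    simp only [Prod.fst_zero, Prod.snd_zero] at h1 h2
    have hz : (0:ℝ) ^ (n-1) = 0 := by apply zero_pow; omega
    rw [hz] at h1
    have hc₁ : c₁ = 0 := by simpa using h1
    have hc₂ : c₂ = 0 := by simpa using h2.symm
    exact hc (by simp [hc₁, hc₂])
  have hn1 : a.1 ^ (n-1-1) * a.1 = a.1 ^ (n-1) := by
    rw [← pow_succ]; congr 1; omega
  have hpos : 0 ≤ a.1 ^ (n-1) := by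
    have hev : Even (n-1) := by
      obtain ⟨k, hk⟩ := hodd
      exact ⟨k, by omega⟩
    exact hev.pow_nonneg a.1
  have key : -(↑n * (↑(n - 1) * a.1 ^ (n - 1 - 1))) * (2 * a.1) - 2 * a.2 * (2 * a.2)
      = -(2 * n * ((n-1 : ℕ) : ℝ) * a.1 ^ (n-1)) - 4 * a.2 ^ 2 := by
    rw [← hn1]; ring
  rw [key]
  intro habs
  have hcoef : (0:ℝ) < 2 * n * ((n-1 : ℕ) : ℝ) := by
    have h1'' : 1 ≤ n := by omega
    have h1' : (1:ℝ) ≤ (n:ℝ) := by exact_mod_cast h1''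
    have h2'' : 1 ≤ n - 1 := by omega
    have h2' : (1:ℝ) ≤ ((n-1:ℕ):ℝ) := by exact_mod_cast h2''
    nlinarith
  have ha2 : a.2 = 0 := by nlinarith [sq_nonneg a.2, mul_nonneg hcoef.le hpos]
  have ha1p : a.1 ^ (n-1) = 0 := by nlinarith [sq_nonneg a.2, mul_nonneg hcoef.le hpos]
  have ha1 : a.1 = 0 := by
    exact pow_eq_zero_iff (by omega : n - 1 ≠ 0) |>.mp ha1p
  exact hane (Prod.ext ha1 ha2)
end

section
/- Let n ≥ 3 and Φ(x) = x₁x₂² + x₁ⁿ - c₁x₁ - c₂x₂. Suppose a = (a₁,a₂) is a degenerate critical point (so a₁ ≠ 0, a₂ ≠ 0, and det Hess Φ(a) = 0, i.e. 4a₂² = 2n(n-1)a₁^{n-1}). Then the cubic form Φ₃ of the Taylor expansion of Φ at a, restricted to the kernel direction x₂ = -(a₂/a₁)x₁ of the Hessian, equals x₁³ · a₁^{n-3} · (n(n-1)/2) · (1 + (n-2)/3), which is nonzero. -/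
/-- The cubic form of the Taylor expansion of `f` at `a`, evaluated on the vector `v`:
`(1/6)·(d³/dt³)|₀ f(a + t v)`. -/
noncomputable def cubicForm (f : ℝ × ℝ → ℝ) (a v : ℝ × ℝ) : ℝ :=
  (deriv^[3] (fun t : ℝ => f (a.1 + t * v.1, a.2 + t * v.2)) 0) / 6


lemma key (m : ℕ) (c₁ c₂ A B v1 v2 : ℝ) :
    deriv^[3] (fun t : ℝ => (A + t*v1)*(B+t*v2)^2 + (A+t*v1)^(m+3) - c₁*(A+t*v1) - c₂*(B+t*v2)) 0
    = 6*v1*v2^2 + ((m:ℝ)+3)*((m:ℝ)+2)*((m:ℝ)+1)*A^m*v1^3 := by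
  have h1 : ∀ t : ℝ, HasDerivAt (fun t : ℝ => A + t*v1) v1 t := fun t =>
    by simpa using ((hasDerivAt_id t).mul_const v1).const_add A
  have h2 : ∀ t : ℝ, HasDerivAt (fun t : ℝ => B + t*v2) v2 t := fun t =>
    by simpa using ((hasDerivAt_id t).mul_const v2).const_add B
  have d1 : deriv (fun t : ℝ => (A + t*v1)*(B+t*v2)^2 + (A+t*v1)^(m+3) - c₁*(A+t*v1) - c₂*(B+t*v2))
      = fun t : ℝ => v1*(B+t*v2)^2 + (A+t*v1)*(2*(B+t*v2)*v2) + ((m:ℝ)+3)*(A+t*v1)^(m+2)*v1 - c₁*v1 - c₂*v2 := by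
    funext t
    have : HasDerivAt (fun t : ℝ => (A + t*v1)*(B+t*v2)^2 + (A+t*v1)^(m+3) - c₁*(A+t*v1) - c₂*(B+t*v2))
        (v1*(B+t*v2)^2 + (A+t*v1)*(2*(B+t*v2)*v2) + ((m:ℝ)+3)*(A+t*v1)^(m+2)*v1 - c₁*v1 - c₂*v2) t := by
      have hp := (h1 t).pow (m+3)
      have hq := (h2 t).pow 2
      have := (((h1 t).fun_mul ((h2 t).fun_pow 2)).fun_add ((h1 t).fun_pow (m+3))).fun_sub ((h1 t).const_mul c₁) |>.fun_sub ((h2 t).const_mul c₂)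
      refine this.congr_deriv ?_
      push_cast
      ring
    exact this.deriv
  have d2 : deriv (fun t : ℝ => v1*(B+t*v2)^2 + (A+t*v1)*(2*(B+t*v2)*v2) + ((m:ℝ)+3)*(A+t*v1)^(m+2)*v1 - c₁*v1 - c₂*v2)
      = fun t : ℝ => 4*v1*(B+t*v2)*v2 + (A+t*v1)*(2*v2^2) + ((m:ℝ)+3)*((m:ℝ)+2)*(A+t*v1)^(m+1)*v1^2 := by
    funext t
    have : HasDerivAt (fun t : ℝ => v1*(B+t*v2)^2 + (A+t*v1)*(2*(B+t*v2)*v2) + ((m:ℝ)+3)*(A+t*v1)^(m+2)*v1 - c₁*v1 - c₂*v2)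
        (4*v1*(B+t*v2)*v2 + (A+t*v1)*(2*v2^2) + ((m:ℝ)+3)*((m:ℝ)+2)*(A+t*v1)^(m+1)*v1^2) t := by
      have := (((((h2 t).fun_pow 2).const_mul v1).fun_add
          ((h1 t).fun_mul ((((h2 t).const_mul 2).mul_const v2)))).fun_add
          ((((h1 t).fun_pow (m+2)).const_mul ((m:ℝ)+3)).mul_const v1)).fun_sub (hasDerivAt_const t (c₁*v1)) |>.fun_sub (hasDerivAt_const t (c₂*v2))
      refine this.congr_deriv ?_
      push_cast
      ring
    exact this.deriv
  have d3 : deriv (fun t : ℝ => 4*v1*(B+t*v2)*v2 + (A+t*v1)*(2*v2^2) + ((m:ℝ)+3)*((m:ℝ)+2)*(A+t*v1)^(m+1)*v1^2)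
      = fun t : ℝ => 6*v1*v2^2 + ((m:ℝ)+3)*((m:ℝ)+2)*((m:ℝ)+1)*(A+t*v1)^m*v1^3 := by
    funext t
    have : HasDerivAt (fun t : ℝ => 4*v1*(B+t*v2)*v2 + (A+t*v1)*(2*v2^2) + ((m:ℝ)+3)*((m:ℝ)+2)*(A+t*v1)^(m+1)*v1^2)
        (6*v1*v2^2 + ((m:ℝ)+3)*((m:ℝ)+2)*((m:ℝ)+1)*(A+t*v1)^m*v1^3) t := by
      have := (((((h2 t).const_mul (4*v1)).mul_const v2).fun_add
          ((h1 t).mul_const (2*v2^2))).fun_add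
          ((((h1 t).fun_pow (m+1)).const_mul (((m:ℝ)+3)*((m:ℝ)+2))).mul_const (v1^2)))
      refine this.congr_deriv ?_
      push_cast
      ring
    exact this.deriv
  show deriv (deriv (deriv _)) 0 = _
  rw [d1, d2, d3]
  ring
theorem stmt3 (n : ℕ) (hn : 3 ≤ n) (c₁ c₂ : ℝ)
    (Φ : ℝ × ℝ → ℝ)
    (hΦ : Φ = fun x => x.1 * x.2 ^ 2 + x.1 ^ n - c₁ * x.1 - c₂ * x.2)
    (a : ℝ × ℝ) (ha1 : a.1 ≠ 0) (ha2 : a.2 ≠ 0)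
    (hcrit : pd1 Φ a = 0 ∧ pd2 Φ a = 0)
    (hdeg : 4 * a.2 ^ 2 = 2 * (n : ℝ) * ((n : ℝ) - 1) * a.1 ^ (n - 1)) :
    (∀ x₁ : ℝ, cubicForm Φ a (x₁, -(a.2 / a.1) * x₁) =
        x₁ ^ 3 * a.1 ^ (n - 3) * ((n : ℝ) * ((n : ℝ) - 1) / 2) * (1 + ((n : ℝ) - 2) / 3)) ∧
    a.1 ^ (n - 3) * ((n : ℝ) * ((n : ℝ) - 1) / 2) * (1 + ((n : ℝ) - 2) / 3) ≠ 0 := by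
  obtain ⟨m, rfl⟩ : ∃ m, n = m + 3 := ⟨n - 3, by omega⟩
  have hsub3 : m + 3 - 3 = m := by omega
  have hsub1 : m + 3 - 1 = m + 2 := by omega
  rw [hsub3]
  rw [hsub1] at hdeg
  have hcast : ((m + 3 : ℕ) : ℝ) = (m : ℝ) + 3 := by push_cast; ring
  rw [hcast] at hdeg ⊢
  have hdeg' : a.2 ^ 2 = ((m:ℝ)+3) * ((m:ℝ)+2) * a.1 ^ (m+2) / 2 := by
    linarith [hdeg]
  constructor
  · intro x₁
    have hc : cubicForm Φ a (x₁, -(a.2 / a.1) * x₁)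
        = (6*x₁*(-(a.2 / a.1) * x₁)^2 + ((m:ℝ)+3)*((m:ℝ)+2)*((m:ℝ)+1)*a.1^m*x₁^3) / 6 := by
      rw [cubicForm, hΦ]
      rw [key m c₁ c₂ a.1 a.2 x₁ (-(a.2 / a.1) * x₁)]
    rw [hc]
    field_simp
    linear_combination (36 * x₁^3) * hdeg'
  · have h1 : a.1 ^ m ≠ 0 := pow_ne_zero m ha1
    have e2 : ((m:ℝ)+3-1) = (m:ℝ)+2 := by ring
    have h2 : ((m:ℝ)+3) * ((m:ℝ)+3-1) / 2 ≠ 0 := by rw [e2]; positivity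
    have e3 : ((m:ℝ)+3-2) = (m:ℝ)+1 := by ring
    have h3 : (1 + ((m:ℝ)+3-2)/3) ≠ 0 := by rw [e3]; positivity
    exact mul_ne_zero (mul_ne_zero h1 h2) h3
end

section
/- Let m ≥ 2, γ with 3/4 < γ ≤ 1, and σ₁⁰ ∈ ℝ. The function s = (s₁, s₂) ↦ |s₁/s₂^{2m/(m+1)} - σ₁⁰|^{-(4γ/3 - 1)} · |s₂|^{-((2m+1)γ/(m+1) - 1)}, defined for s₂ > 0, is not in L^p on any neighborhood of {(σ₁⁰·t^{2m/(m+1)}, t) : t > 0 small} intersected with a neighborhood of the origin, for p = 3/(4γ - 3). -/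
open Real MeasureTheory
open scoped ENNReal NNReal
open Set in

lemma aux_inv_lint (h : ℝ) (hh : 0 < h) :
    ∫⁻ x in Set.Ioo (0:ℝ) h, ENNReal.ofReal x⁻¹ = ⊤ := by
  by_contra hne
  have hmeas : AEStronglyMeasurable (fun x : ℝ => x⁻¹)
      (volume.restrict (Set.Ioo (0:ℝ) h)) :=
    (measurable_inv : Measurable fun x : ℝ => x⁻¹).aestronglyMeasurable
  have hnn : 0 ≤ᵐ[volume.restrict (Set.Ioo (0:ℝ) h)] fun x : ℝ => x⁻¹ := by
    filter_upwards [ae_restrict_mem measurableSet_Ioo] with x hx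
    exact inv_nonneg.mpr hx.1.le
  have hint : Integrable (fun x : ℝ => x⁻¹) (volume.restrict (Set.Ioo (0:ℝ) h)) :=
    (lintegral_ofReal_ne_top_iff_integrable hmeas hnn).mp hne
  have h2 : IntegrableOn (fun x : ℝ => x ^ (-1 : ℝ)) (Set.Ioo (0:ℝ) h) := by
    have : (fun x : ℝ => x ^ (-1 : ℝ)) = fun x : ℝ => x⁻¹ := by
      funext x; exact Real.rpow_neg_one x
    rw [this]; exact hint
  have := (intervalIntegral.integrableOn_Ioo_rpow_iff hh).mp h2
  linarith

lemma aux_shift_lint (v h : ℝ) (hh : 0 < h) :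
    ∫⁻ x in Set.Ioo v (v + h), ENNReal.ofReal (x - v)⁻¹ = ⊤ := by
  have key : ∫⁻ x in Set.Ioo v (v + h), ENNReal.ofReal (x - v)⁻¹
      = ∫⁻ x in Set.Ioo (0:ℝ) h, ENNReal.ofReal x⁻¹ := by
    rw [← lintegral_indicator measurableSet_Ioo _,
        ← lintegral_indicator measurableSet_Ioo _]
    rw [← lintegral_add_right_eq_self
      (fun y => (Set.Ioo v (v + h)).indicator (fun x => ENNReal.ofReal (x - v)⁻¹) y) v]
    congr 1
    funext y
    by_cases hy : y ∈ Set.Ioo (0:ℝ) h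
    · rw [Set.indicator_of_mem hy, Set.indicator_of_mem (by
        constructor <;> [linarith [hy.1]; linarith [hy.2]])]
      simp
    · rw [Set.indicator_of_notMem hy, Set.indicator_of_notMem (by
        intro hc; exact hy ⟨by linarith [hc.1], by linarith [hc.2]⟩)]
  rw [key]; exact aux_inv_lint h hh


/-- The lower-bound function for the Randol maximal function in the exceptional case
fails to be `L^p` for `p = 3/(4γ-3)` on any open set containing the curve
`t ↦ (σ₀ t^{2m/(m+1)}, t)` for all small `t > 0`. -/
theorem stmt14 (m : ℕ) (hm : 2 ≤ m) (γ : ℝ) (hγ : 3 / 4 < γ) (hγ1 : γ ≤ 1) (σ₀ : ℝ) :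
    ∀ U : Set (ℝ × ℝ), IsOpen U →
      (∃ δ > (0 : ℝ), ∀ t : ℝ, 0 < t → t < δ →
        (σ₀ * t ^ ((2 * (m : ℝ)) / ((m : ℝ) + 1)), t) ∈ U) →
      ¬ MeasureTheory.MemLp
        (fun s : ℝ × ℝ =>
          |s.1 / s.2 ^ ((2 * (m : ℝ)) / ((m : ℝ) + 1)) - σ₀| ^ (-(4 * γ / 3 - 1)) *
            s.2 ^ (-((2 * (m : ℝ) + 1) * γ / ((m : ℝ) + 1) - 1)))
        (ENNReal.ofReal (3 / (4 * γ - 3)))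
        (MeasureTheory.volume.restrict (U ∩ {s : ℝ × ℝ | 0 < s.2})) := by
  intro U hU hcur hmem
  obtain ⟨δ, hδ, hcurve⟩ := hcur
  set a : ℝ := (2 * (m:ℝ)) / ((m:ℝ) + 1) with ha_def
  set b : ℝ := 4 * γ / 3 - 1 with hb_def
  set c : ℝ := (2 * (m:ℝ) + 1) * γ / ((m:ℝ) + 1) - 1 with hc_def
  set p : ℝ := 3 / (4 * γ - 3) with hp_def
  set f₀ : ℝ × ℝ → ℝ := fun s : ℝ × ℝ => |s.1 / s.2 ^ a - σ₀| ^ (-b) * s.2 ^ (-c)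
    with hf₀_def
  have hm2 : (2:ℝ) ≤ (m:ℝ) := by exact_mod_cast hm
  have hm1 : (0:ℝ) < (m:ℝ) + 1 := by linarith
  have ha : 0 < a := div_pos (by linarith) hm1
  have h43 : 0 < 4 * γ - 3 := by linarith
  have hp : 0 < p := div_pos (by norm_num) h43
  have hbp : b * p = 1 := by
    rw [hb_def, hp_def]; field_simp
  -- geometric setup
  set F : ℝ → ℝ := fun T => σ₀ * T ^ a with hF_def
  set t₀ : ℝ := δ / 2 with ht0_def
  have ht₀ : 0 < t₀ := by rw [ht0_def]; linarith
  have hPU : (F t₀, t₀) ∈ U := hcurve t₀ ht₀ (by rw [ht0_def]; linarith)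
  obtain ⟨ε, hε, hball⟩ := Metric.isOpen_iff.mp hU _ hPU
  set ε₁ : ℝ := min ε t₀ with hε₁_def
  have hε₁ : 0 < ε₁ := lt_min hε ht₀
  have hε₁ε : ε₁ ≤ ε := min_le_left _ _
  have hε₁t : ε₁ ≤ t₀ := min_le_right _ _
  have hrect : ∀ s : ℝ × ℝ, dist s.1 (F t₀) < ε₁ → dist s.2 t₀ < ε₁ →
      s ∈ U ∩ {s : ℝ × ℝ | 0 < s.2} := by
    intro s h1 h2
    refine ⟨hball ?_, ?_⟩
    · rw [Metric.mem_ball, Prod.dist_eq]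
      exact max_lt (lt_of_lt_of_le h1 hε₁ε) (lt_of_lt_of_le h2 hε₁ε)
    · rw [Real.dist_eq, abs_sub_lt_iff] at h2
      have : t₀ - s.2 < ε₁ := h2.2
      show 0 < s.2
      linarith
  -- continuity of F at t₀
  have hFcont : ContinuousAt F t₀ :=
    continuousAt_const.mul (Real.continuousAt_rpow_const t₀ a (Or.inl ht₀.ne'))
  obtain ⟨η₀, hη₀, hFclose⟩ := Metric.continuousAt_iff.mp hFcont (ε₁/2) (by positivity)
  set η : ℝ := min η₀ ε₁ with hη_def
  have hη : 0 < η := lt_min hη₀ hε₁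
  set J : Set ℝ := Set.Ioo (t₀ - η) (t₀ + η) with hJ_def
  set I : Set ℝ := Metric.ball (F t₀) ε₁ with hI_def
  have hJprop : ∀ T ∈ J, 0 < T ∧ dist T t₀ < ε₁ ∧ |F T - F t₀| < ε₁ / 2 := by
    intro T hT
    obtain ⟨hT1, hT2⟩ := hT
    have hd : dist T t₀ < η := by
      rw [Real.dist_eq, abs_sub_lt_iff]; constructor <;> linarith
    have hη₁ : η ≤ ε₁ := min_le_right _ _
    have hη₂ : η ≤ η₀ := min_le_left _ _
    refine ⟨by linarith, lt_of_lt_of_le hd hη₁, ?_⟩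
    have := hFclose (lt_of_lt_of_le hd hη₂)
    rwa [Real.dist_eq] at this
  have hIJ : I ×ˢ J ⊆ U ∩ {s : ℝ × ℝ | 0 < s.2} := by
    rintro ⟨x, T⟩ ⟨hx, hT⟩
    exact hrect (x, T) (Metric.mem_ball.mp hx) (hJprop T hT).2.1
  -- measurability
  have hfmeas : Measurable f₀ := by
    rw [hf₀_def]
    exact ((((measurable_fst.div (measurable_snd.pow measurable_const)).sub
      measurable_const).abs).pow measurable_const).mul
      (measurable_snd.pow measurable_const)
  have hgmeas : Measurable fun s : ℝ × ℝ => (‖f₀ s‖₊ : ℝ≥0∞) ^ p :=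
    (hfmeas.nnnorm.coe_nnreal_ennreal).pow measurable_const
  -- inner integral is infinite
  have hinner : ∀ T ∈ J, ∫⁻ x in I, (‖f₀ (x, T)‖₊ : ℝ≥0∞) ^ p = ⊤ := by
    intro T hT
    obtain ⟨hTpos, _, hFT⟩ := hJprop T hT
    have hTa : 0 < T ^ a := Real.rpow_pos_of_pos hTpos a
    set K : Set ℝ := Set.Ioo (F T) (F T + ε₁ / 2) with hK_def
    have hKI : K ⊆ I := by
      intro x hx
      rw [hI_def, Metric.mem_ball, Real.dist_eq]
      obtain ⟨hx1, hx2⟩ := hx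
      rw [abs_sub_lt_iff]
      rw [abs_sub_lt_iff] at hFT
      constructor <;> linarith [hFT.1, hFT.2]
    have hpoint : ∀ x ∈ K, (‖f₀ (x, T)‖₊ : ℝ≥0∞) ^ p
        = ENNReal.ofReal (T ^ (a - c * p)) * ENNReal.ofReal ((x - F T)⁻¹) := by
      intro x hx
      obtain ⟨hx1, hx2⟩ := hx
      have hu : 0 < x / T ^ a - σ₀ := by
        rw [sub_pos, lt_div_iff₀ hTa]
        have hx1' : σ₀ * T ^ a < x := by simpa [hF_def] using hx1
        linarith
      have hf0nn : 0 ≤ f₀ (x, T) :=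
        mul_nonneg (Real.rpow_nonneg (abs_nonneg _) _) (Real.rpow_nonneg hTpos.le _)
      rw [← enorm_eq_nnnorm, Real.enorm_eq_ofReal hf0nn, ENNReal.ofReal_rpow_of_nonneg hf0nn hp.le]
      rw [← ENNReal.ofReal_mul (Real.rpow_nonneg hTpos.le _)]
      congr 1
      have habs : |x / T ^ a - σ₀| = x / T ^ a - σ₀ := abs_of_pos hu
      have hval : f₀ (x, T) = (x / T ^ a - σ₀) ^ (-b) * T ^ (-c) := by
        rw [hf₀_def]; simp only []; rw [habs]
      rw [hval, Real.mul_rpow (Real.rpow_nonneg hu.le _) (Real.rpow_nonneg hTpos.le _),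
        ← Real.rpow_mul hu.le, ← Real.rpow_mul hTpos.le]
      have hb1 : -b * p = -1 := by rw [neg_mul, hbp]
      rw [hb1, Real.rpow_neg_one]
      have huval : (x / T ^ a - σ₀)⁻¹ = T ^ a * (x - F T)⁻¹ := by
        rw [hF_def]
        field_simp
      rw [huval]
      rw [show a - c * p = a + (-c * p) by ring, Real.rpow_add hTpos]
      ring
    have hKlint : ∫⁻ x in K, (‖f₀ (x, T)‖₊ : ℝ≥0∞) ^ p = ⊤ := by
      rw [setLIntegral_congr_fun measurableSet_Ioo
        (fun x hx => hpoint x hx)]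
      rw [lintegral_const_mul' _ _ ENNReal.ofReal_ne_top]
      rw [aux_shift_lint (F T) (ε₁ / 2) (by positivity)]
      rw [ENNReal.mul_top]
      exact (ENNReal.ofReal_pos.mpr (Real.rpow_pos_of_pos hTpos _)).ne'
    exact eq_top_iff.mpr (hKlint ▸ lintegral_mono_set hKI)
  -- outer integral
  have hJint : ∫⁻ T in J, ∫⁻ x in I, (‖f₀ (x, T)‖₊ : ℝ≥0∞) ^ p = ⊤ := by
    rw [setLIntegral_congr_fun measurableSet_Ioo
      (fun T hT => hinner T hT)]
    rw [setLIntegral_const]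
    have hJvol : volume J ≠ 0 := by
      simp only [hJ_def, Real.volume_Ioo]
      exact (ENNReal.ofReal_pos.mpr (by linarith)).ne'
    exact ENNReal.top_mul hJvol
  have hprod : ∫⁻ s in I ×ˢ J, (‖f₀ s‖₊ : ℝ≥0∞) ^ p = ⊤ := by
    rw [Measure.volume_eq_prod, ← Measure.prod_restrict]
    rw [lintegral_prod_symm _ hgmeas.aemeasurable]
    exact hJint
  have htot : ∫⁻ s in U ∩ {s : ℝ × ℝ | 0 < s.2}, (‖f₀ s‖₊ : ℝ≥0∞) ^ p = ⊤ :=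
    eq_top_iff.mpr (hprod ▸ lintegral_mono_set hIJ)
  -- contradiction with Memℒp
  have h2 := hmem.2
  rw [eLpNorm_eq_lintegral_rpow_enorm_toReal (ENNReal.ofReal_pos.mpr hp).ne'
    ENNReal.ofReal_ne_top, ENNReal.toReal_ofReal hp.le] at h2
  simp only [enorm_eq_nnnorm] at h2
  rw [htot] at h2
  rw [ENNReal.top_rpow_of_pos (by positivity)] at h2
  exact lt_irrefl _ h2
end
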